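/- Let ρ ∈ E be nonzero, let (α_i)_{i∈I} be a finite family of vectors of E with ⟨α_i, ρ⟩ > 0 for every i ∈ I, and let K > 0. Then there exist C > 0 and θ₀ ∈ (0,1) such that for every θ ∈ (0, θ₀] and all vectors a, b ∈ E satisfying ‖a‖ ≥ θ^{−2}, ‖a − b‖ ≤ K, and ∠(a, ρ) ≤ θ, one has ⟨α_i, a⟩ > 0 for all i ∈ I and | ∏_{i∈I} ⟨α_i, b⟩/⟨α_i, a⟩ − 1 | ≤ C·θ. -/

import Mathlib

open RealInnerProductSpace

lemma abs_prod_sub_one_le' {ι : Type*} (s : Finset ι) (x : ι → ℝ) (δ : ℝ)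
    (hδ : δ ≤ 1) (h : ∀ i ∈ s, |x i - 1| ≤ δ) :
    |(∏ i ∈ s, x i) - 1| ≤ (2 ^ s.card - 1) * δ := by
  induction s using Finset.cons_induction with
  | empty => simp
  | cons j s hj ih =>
    have hδ0 : 0 ≤ δ := le_trans (abs_nonneg _) (h j (Finset.mem_cons_self j s))
    have hxj : |x j - 1| ≤ δ := h j (Finset.mem_cons_self j s)
    have ih' := ih (fun i hi => h i (Finset.mem_cons_of_mem hi))
    have habs : |x j| ≤ 2 := by
      have := abs_sub_abs_le_abs_sub (x j) 1
      simp at this; linarith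
    have key : (∏ i ∈ Finset.cons j s hj, x i) - 1 = x j * ((∏ i ∈ s, x i) - 1) + (x j - 1) := by
      rw [Finset.prod_cons]; ring
    rw [key, Finset.card_cons]
    calc |x j * ((∏ i ∈ s, x i) - 1) + (x j - 1)|
        ≤ |x j| * |(∏ i ∈ s, x i) - 1| + |x j - 1| := by
          rw [← abs_mul]; exact abs_add_le _ _
      _ ≤ 2 * ((2 ^ s.card - 1) * δ) + δ := by
          have hp : (0:ℝ) ≤ (2 ^ s.card - 1) * δ :=
            mul_nonneg (by have : (1:ℝ) ≤ 2 ^ s.card := one_le_pow₀ (by norm_num); linarith) hδ0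
          nlinarith [abs_nonneg ((∏ i ∈ s, x i) - 1)]
      _ ≤ (2 ^ (s.card + 1) - 1) * δ := by
          have h1 : (1:ℝ) ≤ 2 ^ s.card := one_le_pow₀ (by norm_num)
          rw [pow_succ]; nlinarith

set_option maxHeartbeats 1000000 in
theorem prod_inner_ratio_close_to_one {E : Type*} [NormedAddCommGroup E]
    [InnerProductSpace ℝ E] [FiniteDimensional ℝ E]
    (ρ : E) (hρ : ρ ≠ 0) {I : Type*} [Fintype I] (α : I → E)
    (hα : ∀ i, 0 < ⟪α i, ρ⟫) (K : ℝ) (hK : 0 < K) :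
    ∃ C > (0 : ℝ), ∃ θ₀ ∈ Set.Ioo (0 : ℝ) 1, ∀ θ ∈ Set.Ioc (0 : ℝ) θ₀, ∀ a b : E,
      θ ^ (-2 : ℤ) ≤ ‖a‖ → ‖a - b‖ ≤ K → InnerProductGeometry.angle a ρ ≤ θ →
      (∀ i, 0 < ⟪α i, a⟫) ∧ |(∏ i, ⟪α i, b⟫ / ⟪α i, a⟫) - 1| ≤ C * θ := by
  rcases isEmpty_or_nonempty I with hI | hI
  · refine ⟨1, one_pos, 1/2, ⟨by norm_num, by norm_num⟩, fun θ hθ a b _ _ _ => ?_⟩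
    refine ⟨fun i => isEmptyElim i, ?_⟩
    simp only [Finset.univ_eq_empty, Finset.prod_empty, sub_self, abs_zero, one_mul]
    linarith [hθ.1]
  have hρn : (0:ℝ) < ‖ρ‖ := norm_pos_iff.mpr hρ
  obtain ⟨c, hcpos, hcle⟩ : ∃ c, 0 < c ∧ ∀ i, c ≤ ⟪α i, ρ⟫ / ‖ρ‖ := by
    refine ⟨Finset.univ.inf' Finset.univ_nonempty (fun i => ⟪α i, ρ⟫ / ‖ρ‖), ?_, ?_⟩
    · rw [Finset.lt_inf'_iff]
      exact fun i _ => div_pos (hα i) hρn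
    · exact fun i => Finset.inf'_le _ (Finset.mem_univ i)
  obtain ⟨M, hM1, hMα⟩ : ∃ M, 1 ≤ M ∧ ∀ i, ‖α i‖ ≤ M := by
    refine ⟨1 + Finset.univ.sup' Finset.univ_nonempty (fun i => ‖α i‖), ?_, ?_⟩
    · have h := Finset.le_sup' (fun i => ‖α i‖) (Finset.mem_univ hI.some)
      have := norm_nonneg (α hI.some)
      linarith
    · intro i
      have h := Finset.le_sup' (fun i => ‖α i‖) (Finset.mem_univ i)
      linarith
  have hMpos : (0:ℝ) < M := lt_of_lt_of_le one_pos hM1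
  obtain ⟨θ₀, hθ₀⟩ : ∃ x : ℝ, x = min (1/2) (min (c/(2*M)) (c/(2*M*K))) := ⟨_, rfl⟩
  have hθ₀pos : 0 < θ₀ := by
    rw [hθ₀]
    exact lt_min (by norm_num) (lt_min (by positivity) (by positivity))
  obtain ⟨C, hC⟩ : ∃ x : ℝ, x = 2 ^ (Fintype.card I) * (2*M*K/c) := ⟨_, rfl⟩
  have hCpos : 0 < C := by rw [hC]; positivity
  refine ⟨C, hCpos, θ₀, ⟨hθ₀pos, lt_of_le_of_lt (hθ₀ ▸ min_le_left _ _) (by norm_num)⟩,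
    fun θ hθ a b ha hab hang => ?_⟩
  have hθ0 : 0 < θ := hθ.1
  have hθle : θ ≤ θ₀ := hθ.2
  rw [hθ₀] at hθle
  have hθhalf : θ ≤ 1/2 := le_trans hθle (min_le_left _ _)
  have hθcM : θ ≤ c/(2*M) := le_trans hθle (le_trans (min_le_right _ _) (min_le_left _ _))
  have hθcMK : θ ≤ c/(2*M*K) := le_trans hθle (le_trans (min_le_right _ _) (min_le_right _ _))
  have hzpow : θ ^ (-2:ℤ) = (θ^2)⁻¹ := by
    rw [zpow_neg]; norm_cast
  have hapos : 0 < ‖a‖ := lt_of_lt_of_le (by rw [hzpow]; positivity) ha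
  have ha0 : a ≠ 0 := norm_pos_iff.mp hapos
  -- cosine bound
  have hcos1 : Real.cos θ ≤ Real.cos (InnerProductGeometry.angle a ρ) :=
    Real.cos_le_cos_of_nonneg_of_le_pi (InnerProductGeometry.angle_nonneg a ρ)
      (by linarith [Real.pi_gt_three]) hang
  have hcos2 : 1 - θ^2/2 ≤ Real.cos (InnerProductGeometry.angle a ρ) :=
    le_trans (Real.one_sub_sq_div_two_le_cos) hcos1
  -- unit vectors
  set u := ‖a‖⁻¹ • a with hu
  set v := ‖ρ‖⁻¹ • ρ with hv
  have hnu : ‖u‖ = 1 := by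
    rw [hu, norm_smul, norm_inv, norm_norm, inv_mul_cancel₀ hapos.ne']
  have hnv : ‖v‖ = 1 := by
    rw [hv, norm_smul, norm_inv, norm_norm, inv_mul_cancel₀ hρn.ne']
  have hinneruv : ⟪u, v⟫ = Real.cos (InnerProductGeometry.angle a ρ) := by
    rw [InnerProductGeometry.cos_angle, hu, hv, real_inner_smul_left, real_inner_smul_right]
    field_simp
  have hdist : ‖u - v‖ ≤ θ := by
    have hsq : ‖u - v‖^2 ≤ θ^2 := by
      rw [norm_sub_sq_real, hnu, hnv, hinneruv]
      nlinarith
    nlinarith [norm_nonneg (u - v), hθ0]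
  -- per-index lower bound on ⟪α i, u⟫
  have hui : ∀ i, c/2 ≤ ⟪α i, u⟫ := by
    intro i
    have h1 : ⟪α i, u⟫ = ⟪α i, v⟫ + ⟪α i, u - v⟫ := by
      rw [inner_sub_right]; ring
    have h2 : c ≤ ⟪α i, v⟫ := by
      rw [hv, real_inner_smul_right]
      have h := hcle i
      rw [div_eq_inv_mul] at h
      exact h
    have h3 : |⟪α i, u - v⟫| ≤ M * θ := by
      calc |⟪α i, u - v⟫| ≤ ‖α i‖ * ‖u - v‖ := abs_real_inner_le_norm _ _
        _ ≤ M * θ := mul_le_mul (hMα i) hdist (norm_nonneg _) hMpos.le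
    have h4 : M * θ ≤ c/2 := by
      rw [le_div_iff₀ (by positivity : (0:ℝ) < 2*M)] at hθcM
      nlinarith
    obtain ⟨hl, hr⟩ := abs_le.mp h3
    linarith
  have hai : ∀ i, ⟪α i, a⟫ = ‖a‖ * ⟪α i, u⟫ := by
    intro i
    rw [hu, real_inner_smul_right]
    field_simp
  have hAlow : ∀ i, (θ^2)⁻¹ * (c/2) ≤ ⟪α i, a⟫ := by
    intro i
    rw [hai i]
    have : (θ^2)⁻¹ ≤ ‖a‖ := hzpow ▸ ha
    exact mul_le_mul this (hui i) (by positivity) hapos.le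
  have hApos : ∀ i, 0 < ⟪α i, a⟫ := fun i =>
    lt_of_lt_of_le (by positivity) (hAlow i)
  refine ⟨hApos, ?_⟩
  -- ratio bound
  obtain ⟨δ, hδ⟩ : ∃ x : ℝ, x = (2*M*K/c) * θ := ⟨_, rfl⟩
  have hδ1 : δ ≤ 1 := by
    rw [hδ]
    rw [le_div_iff₀ (by positivity : (0:ℝ) < 2*M*K)] at hθcMK
    rw [div_mul_eq_mul_div, div_le_one hcpos]
    nlinarith
  have hratio : ∀ i, |⟪α i, b⟫ / ⟪α i, a⟫ - 1| ≤ δ := by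
    intro i
    have hA := hApos i
    have h1 : ⟪α i, b⟫ / ⟪α i, a⟫ - 1 = ⟪α i, b - a⟫ / ⟪α i, a⟫ := by
      rw [inner_sub_right]; field_simp
    rw [h1, abs_div, abs_of_pos hA]
    have h2 : |⟪α i, b - a⟫| ≤ M * K := by
      calc |⟪α i, b - a⟫| ≤ ‖α i‖ * ‖b - a‖ := abs_real_inner_le_norm _ _
        _ ≤ M * K := by
            have : ‖b - a‖ ≤ K := by rwa [norm_sub_rev] at hab
            exact mul_le_mul (hMα i) this (norm_nonneg _) hMpos.le
    rw [div_le_iff₀ hA]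
    have hδθ : δ * ((θ^2)⁻¹ * (c/2)) = M * K * θ⁻¹ := by
      have e1 : θ * θ⁻¹ = 1 := mul_inv_cancel₀ hθ0.ne'
      have e2 : c / c = 1 := div_self hcpos.ne'
      calc δ * ((θ^2)⁻¹ * (c/2))
          = (M*K*θ⁻¹) * ((θ*θ⁻¹) * (c/c)) := by rw [hδ, pow_two, mul_inv]; ring
        _ = M * K * θ⁻¹ := by rw [e1, e2]; ring
    calc |⟪α i, b - a⟫| ≤ M * K := h2
      _ ≤ M * K * θ⁻¹ := by
          have hθ1 : θ ≤ 1 := by linarith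
          have h5 : (1:ℝ) ≤ θ⁻¹ := by
            nlinarith [inv_pos.mpr hθ0, mul_inv_cancel₀ hθ0.ne']
          nlinarith [mul_pos hMpos hK]
      _ = δ * ((θ^2)⁻¹ * (c/2)) := hδθ.symm
      _ ≤ δ * ⟪α i, a⟫ := by
          have hδ0 : 0 ≤ δ := by rw [hδ]; positivity
          exact mul_le_mul_of_nonneg_left (hAlow i) hδ0
  have := abs_prod_sub_one_le' Finset.univ (fun i => ⟪α i, b⟫ / ⟪α i, a⟫) δ hδ1
    (fun i _ => hratio i)
  simp only [Finset.card_univ] at this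
  calc |(∏ i, ⟪α i, b⟫ / ⟪α i, a⟫) - 1| ≤ (2 ^ Fintype.card I - 1) * δ := this
    _ ≤ C * θ := by
        rw [hC, hδ]
        have h1 : (1:ℝ) ≤ 2 ^ Fintype.card I := one_le_pow₀ (by norm_num)
        have h2 : 0 ≤ (2*M*K/c) * θ := by positivity
        nlinarith [mul_nonneg (div_nonneg (by positivity : (0:ℝ) ≤ 2*M*K) hcpos.le) hθ0.le]
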